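/- In the setting of the GTDS differential bound (all $1 < \deg p_i \leq d$, $\delta(p_i) < q$, $p_i$ of degree $< q$), for any $\Delta\mathbf{x} \neq \mathbf{0}$ and any $\Delta\mathbf{y}$, the differential probability satisfies $\Pr_{\mathbf{x} \in \mathbb{F}_q^n}[\mathcal{F}(\mathbf{x} + \Delta\mathbf{x}) - \mathcal{F}(\mathbf{x}) = \Delta\mathbf{y}] \leq (d/q)^{\mathrm{wt}(\Delta\mathbf{x})}$. -/

import Mathlib

open Polynomial Finset
open scoped Classical

/-- Generic counting lemma: triangular system of conditions. -/
lemma gtds_count_aux {F : Type*} [Fintype F] :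
    ∀ (n : ℕ) (b : Fin n → ℕ) (C : Fin n → (Fin n → F) → Prop)
      (_ : ∀ i (x y : Fin n → F), (∀ j, i ≤ j → x j = y j) → C i x → C i y)
      (_ : ∀ i (x : Fin n → F),
        (Finset.univ.filter fun t : F => C i (Function.update x i t)).card ≤ b i),
    (Finset.univ.filter fun x : Fin n → F => ∀ i, C i x).card ≤ ∏ i, b i := by
  intro n
  induction n with
  | zero =>
      intro b C _ _
      simpa using (Finset.card_filter_le Finset.univ fun x : Fin 0 → F => ∀ i, C i x)
  | succ n ih =>
      intro b C hdep hcnt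
      have hfib : (Finset.univ.filter fun x : Fin (n+1) → F => ∀ i, C i x).card
          = ∑ xt : Fin n → F,
            ((Finset.univ.filter fun x : Fin (n+1) → F => ∀ i, C i x).filter
              fun x => Fin.tail x = xt).card :=
        Finset.card_eq_sum_card_fiberwise (fun x _ => Finset.mem_univ _)
      have hfib2 : ∀ xt : Fin n → F,
          ((Finset.univ.filter fun x : Fin (n+1) → F => ∀ i, C i x).filter
              fun x => Fin.tail x = xt).card
            = (Finset.univ.filter fun x0 : F => ∀ i, C i (Fin.cons x0 xt)).card := by
        intro xt
        apply Finset.card_nbij' (fun x => x 0) (fun x0 => Fin.cons x0 xt)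
        · intro x hx
          simp only [Finset.mem_coe, Finset.mem_filter, Finset.mem_univ, true_and] at hx ⊢
          intro i
          have : Fin.cons (x 0) xt = x := by
            rw [← hx.2]; exact Fin.cons_self_tail x
          rw [this]; exact hx.1 i
        · intro x0 hx0
          simp only [Finset.mem_coe, Finset.mem_filter, Finset.mem_univ, true_and] at hx0 ⊢
          exact ⟨hx0, by simp⟩
        · intro x hx
          simp only [Finset.mem_coe, Finset.mem_filter, Finset.mem_univ, true_and] at hx
          rw [← hx.2]; exact Fin.cons_self_tail x
        · intro x0 _
          simp
      set C' : Fin n → (Fin n → F) → Prop :=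
        fun i xt => ∀ x0 : F, C i.succ (Fin.cons x0 xt) with hC'
      have hagree : ∀ (i : Fin n) (x0 x0' : F) (xt yt : Fin n → F),
          (∀ j, i ≤ j → xt j = yt j) →
          (∀ j, i.succ ≤ j → (Fin.cons x0 xt : Fin (n+1) → F) j = (Fin.cons x0' yt : Fin (n+1) → F) j) := by
        intro i x0 x0' xt yt hxy j hj
        rcases Fin.eq_zero_or_eq_succ j with h0 | ⟨j', rfl⟩
        · exfalso; rw [h0] at hj; simp [Fin.le_def] at hj
        · simp only [Fin.cons_succ]
          exact hxy j' (by rwa [Fin.succ_le_succ_iff] at hj)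
      have hC'dep : ∀ i (xt yt : Fin n → F), (∀ j, i ≤ j → xt j = yt j) →
          C' i xt → C' i yt := by
        intro i xt yt hxy hc x0
        exact hdep i.succ (Fin.cons x0 xt) (Fin.cons x0 yt) (hagree i x0 x0 xt yt hxy) (hc x0)
      have hC'cnt : ∀ i (xt : Fin n → F),
          (Finset.univ.filter fun t : F => C' i (Function.update xt i t)).card ≤ b i.succ := by
        intro i xt
        rcases isEmpty_or_nonempty F with hF | hF
        · simp
        · obtain ⟨z⟩ := hF
          calc (Finset.univ.filter fun t : F => C' i (Function.update xt i t)).card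
              ≤ (Finset.univ.filter fun t : F =>
                  C i.succ (Function.update (Fin.cons z xt) i.succ t)).card := by
                apply Finset.card_le_card
                apply Finset.monotone_filter_right
                intro t _ ht
                have := ht z
                rwa [Fin.cons_update] at this
            _ ≤ b i.succ := by
                convert hcnt i.succ (Fin.cons z xt) using 3
      have hIH : (Finset.univ.filter fun xt : Fin n → F => ∀ i, C' i xt).card
          ≤ ∏ i : Fin n, b i.succ := by
        have := ih (fun i => b i.succ) C' hC'dep (by
          intro i xt
          convert hC'cnt i xt using 3)
        convert this using 3
      rw [hfib]
      calc ∑ xt : Fin n → F,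
            ((Finset.univ.filter fun x : Fin (n+1) → F => ∀ i, C i x).filter
              fun x => Fin.tail x = xt).card
          ≤ ∑ xt : Fin n → F, (if ∀ i, C' i xt then b 0 else 0) := by
            apply Finset.sum_le_sum
            intro xt _
            rw [hfib2 xt]
            by_cases hQ : ∀ i, C' i xt
            · rw [if_pos hQ]
              rcases isEmpty_or_nonempty F with hF | hF
              · simp
              · obtain ⟨z⟩ := hF
                calc (Finset.univ.filter fun x0 : F => ∀ i, C i (Fin.cons x0 xt)).card
                    ≤ (Finset.univ.filter fun x0 : F =>
                        C 0 (Function.update (Fin.cons z xt) 0 x0)).card := by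
                      apply Finset.card_le_card
                      apply Finset.monotone_filter_right
                      intro x0 _ hx0
                      rw [Fin.update_cons_zero]
                      exact hx0 0
                  _ ≤ b 0 := by convert hcnt 0 (Fin.cons z xt) using 3
            · rw [if_neg hQ]
              rw [Nat.le_zero, Finset.card_eq_zero, Finset.filter_eq_empty_iff]
              intro x0 _
              intro hall
              apply hQ
              intro i x0'
              exact hdep i.succ (Fin.cons x0 xt) (Fin.cons x0' xt)
                (hagree i x0 x0' xt xt (fun j _ => rfl)) (hall i.succ)
        _ = ∑ xt ∈ Finset.univ.filter (fun xt : Fin n → F => ∀ i, C' i xt), b 0 := by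
            rw [Finset.sum_filter]
        _ = (Finset.univ.filter fun xt : Fin n → F => ∀ i, C' i xt).card * b 0 := by
            rw [Finset.sum_const, smul_eq_mul]
        _ ≤ (∏ i : Fin n, b i.succ) * b 0 := Nat.mul_le_mul_right _ hIH
        _ = ∏ i : Fin (n+1), b i := by rw [Fin.prod_univ_succ]; ring


lemma gtds_root_count {F : Type*} [Field F] [Fintype F] (d : ℕ) (p : Polynomial F)
    (hd1 : 1 < p.natDegree) (hdd : p.natDegree ≤ d) (a : F) (ha : a ≠ 0)
    (hdu : ∀ b : F, Nat.card {x : F | p.eval (x + a) - p.eval x = b} < Fintype.card F)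
    (G' G c : F) (hG' : G' ≠ 0) (hG : G ≠ 0) :
    (Finset.univ.filter fun t : F => p.eval (t + a) * G' - p.eval t * G = c).card ≤ d := by
  set Q : Polynomial F := C G' * (p.comp (X + C a)) - (C G * p + C c) with hQ
  have hpne : p ≠ 0 := fun h => by simp [h] at hd1
  have heval : ∀ t : F, Q.eval t = p.eval (t + a) * G' - (p.eval t * G + c) := by
    intro t
    simp [hQ, eval_comp]
    ring
  have hcomp_nd : (p.comp (X + C a)).natDegree = p.natDegree := by
    rw [natDegree_comp, natDegree_X_add_C, mul_one]
  have hQd : Q.natDegree ≤ d := by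
    refine le_trans (natDegree_sub_le _ _) (max_le ?_ ?_)
    · exact le_trans (natDegree_C_mul_le _ _) (le_trans hcomp_nd.le hdd)
    · refine le_trans (natDegree_add_le _ _) (max_le ?_ ?_)
      · exact le_trans (natDegree_C_mul_le _ _) hdd
      · simp
  have hQne : Q ≠ 0 := by
    by_cases hGG : G' = G
    · intro h0
      have he : ∀ t : F, p.eval (t + a) - p.eval t = c * G'⁻¹ := by
        intro t
        have h1 := heval t
        rw [h0, eval_zero] at h1
        rw [hGG] at h1
        rw [hGG, eq_mul_inv_iff_mul_eq₀ hG]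
        linear_combination -h1
      have h2 : {x : F | p.eval (x + a) - p.eval x = c * G'⁻¹} = Set.univ :=
        Set.eq_univ_of_forall he
      have h1 := hdu (c * G'⁻¹)
      rw [h2, Nat.card_univ, Nat.card_eq_fintype_card] at h1
      omega
    · intro h0
      have hc : Q.coeff p.natDegree = (G' - G) * p.leadingCoeff := by
        have hlc : (p.comp (X + C a)).coeff p.natDegree = p.leadingCoeff := by
          have : (p.comp (X + C a)).coeff p.natDegree
              = (p.comp (X + C a)).leadingCoeff := by
            rw [leadingCoeff, hcomp_nd]
          rw [this, leadingCoeff_comp (by rw [natDegree_X_add_C]; exact one_ne_zero),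
            leadingCoeff_X_add_C, one_pow, mul_one]
        rw [hQ]
        simp only [coeff_sub, coeff_add, coeff_C_mul, hlc, coeff_C,
          if_neg (by omega : ¬ p.natDegree = 0)]
        rw [leadingCoeff]
        ring
      rw [h0] at hc
      simp only [coeff_zero] at hc
      exact (mul_ne_zero (sub_ne_zero.2 hGG) (leadingCoeff_ne_zero.2 hpne)) hc.symm
  have hsub : (Finset.univ.filter fun t : F => p.eval (t + a) * G' - p.eval t * G = c)
      ⊆ Q.roots.toFinset := by
    intro t ht
    rw [Finset.mem_filter] at ht
    rw [Multiset.mem_toFinset, mem_roots hQne]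
    show Q.eval t = 0
    rw [heval]
    linear_combination ht.2
  calc (Finset.univ.filter fun t : F => p.eval (t + a) * G' - p.eval t * G = c).card
      ≤ Q.roots.toFinset.card := Finset.card_le_card hsub
    _ ≤ Multiset.card Q.roots := Multiset.toFinset_card_le _
    _ ≤ Q.natDegree := Polynomial.card_roots' Q
    _ ≤ d := hQd



/-- Differential count bound for a GTDS. -/
theorem gtds_differential_probability_bound (F : Type*) [Field F] [Fintype F]
    (n : ℕ) (hn : 1 ≤ n) (d : ℕ)
    (p : Fin n → Polynomial F)
    (hp : ∀ i, Function.Bijective (fun x => (p i).eval x))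
    (hdegq : ∀ i, (p i).natDegree < Fintype.card F)
    (hdeg : ∀ i, 1 < (p i).natDegree ∧ (p i).natDegree ≤ d)
    (hdu : ∀ i, ∀ a : F, a ≠ 0 → ∀ b : F,
      Nat.card {x : F | (p i).eval (x + a) - (p i).eval x = b} < Fintype.card F)
    (g h : Fin n → (Fin n → F) → F)
    (hg : ∀ i x, g i x ≠ 0)
    (hgdep : ∀ i x y, (∀ j, i < j → x j = y j) → g i x = g i y)
    (hhdep : ∀ i x y, (∀ j, i < j → x j = y j) → h i x = h i y)
    (𝓕 : (Fin n → F) → Fin n → F)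
    (h𝓕 : ∀ x i, 𝓕 x i = if (i : ℕ) + 1 = n then (p i).eval (x i)
        else (p i).eval (x i) * g i x + h i x)
    (Δx Δy : Fin n → F) (hΔx : Δx ≠ 0) :
    (Nat.card {x : Fin n → F | ∀ i, 𝓕 (fun j => x j + Δx j) i - 𝓕 x i = Δy i} : ℝ) /
        (Fintype.card F : ℝ) ^ n ≤
      ((d : ℝ) / (Fintype.card F : ℝ)) ^ (Finset.univ.filter fun i => Δx i ≠ 0).card := by
  set q : ℕ := Fintype.card F with hq
  have hq0 : 0 < q := Fintype.card_pos
  set C : Fin n → (Fin n → F) → Prop :=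
    fun i x => 𝓕 (fun j => x j + Δx j) i - 𝓕 x i = Δy i with hC
  -- 𝓕 · i only depends on coordinates ≥ i
  have h𝓕dep : ∀ (i : Fin n) (u v : Fin n → F), u i = v i →
      (∀ j, i < j → u j = v j) → 𝓕 u i = 𝓕 v i := by
    intro i u v hi hgt
    rw [h𝓕, h𝓕]
    by_cases hl : (i : ℕ) + 1 = n
    · rw [if_pos hl, if_pos hl, hi]
    · rw [if_neg hl, if_neg hl, hi, hgdep i u v hgt, hhdep i u v hgt]
  have hdep : ∀ (i : Fin n) (x y : Fin n → F), (∀ j, i ≤ j → x j = y j) →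
      C i x → C i y := by
    intro i x y hxy hCx
    have e1 : 𝓕 (fun j => x j + Δx j) i = 𝓕 (fun j => y j + Δx j) i :=
      h𝓕dep i _ _ (by rw [hxy i le_rfl]) (fun j hj => by rw [hxy j hj.le])
    have e2 : 𝓕 x i = 𝓕 y i := h𝓕dep i x y (hxy i le_rfl) (fun j hj => hxy j hj.le)
    show 𝓕 (fun j => y j + Δx j) i - 𝓕 y i = Δy i
    rw [← e1, ← e2]
    exact hCx
  have hcnt : ∀ (i : Fin n) (x : Fin n → F),
      (Finset.univ.filter fun t : F => C i (Function.update x i t)).card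
        ≤ (if Δx i ≠ 0 then d else q) := by
    intro i x
    by_cases hΔ : Δx i = 0
    · rw [if_neg (by simpa using hΔ)]
      exact le_trans (Finset.card_filter_le _ _) (by simp [hq])
    · rw [if_pos hΔ]
      have hupd : ∀ t : F, (fun j => Function.update x i t j + Δx j)
          = Function.update (fun j => x j + Δx j) i (t + Δx i) := by
        intro t
        funext j
        by_cases hj : j = i
        · subst hj; simp
        · simp [Function.update_of_ne hj]
      have hgt_upd : ∀ (t : F) (j : Fin n), i < j → Function.update x i t j = x j :=
        fun t j hj => Function.update_of_ne (ne_of_gt hj) t x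
      have hgt_upd' : ∀ (t : F) (j : Fin n), i < j →
          Function.update (fun j => x j + Δx j) i (t + Δx i) j = x j + Δx j :=
        fun t j hj => Function.update_of_ne (ne_of_gt hj) _ _
      by_cases hl : (i : ℕ) + 1 = n
      · have hcond : ∀ t : F, C i (Function.update x i t) ↔
            ((p i).eval (t + Δx i) * 1 - (p i).eval t * 1 = Δy i) := by
          intro t
          show (𝓕 (fun j => Function.update x i t j + Δx j) i
              - 𝓕 (Function.update x i t) i = Δy i) ↔ _
          rw [hupd t, h𝓕, h𝓕, if_pos hl, if_pos hl, Function.update_self,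
            Function.update_self, mul_one, mul_one]
        rw [Finset.filter_congr (fun t _ => hcond t)]
        exact gtds_root_count d (p i) (hdeg i).1 (hdeg i).2 (Δx i) hΔ
          (hdu i (Δx i) hΔ) 1 1 (Δy i) one_ne_zero one_ne_zero
      · set G' : F := g i (fun j => x j + Δx j) with hG'def
        set G : F := g i x with hGdef
        set H' : F := h i (fun j => x j + Δx j) with hH'def
        set H : F := h i x with hHdef
        have hcond : ∀ t : F, C i (Function.update x i t) ↔
            ((p i).eval (t + Δx i) * G' - (p i).eval t * G = Δy i - H' + H) := by
          intro t
          show (𝓕 (fun j => Function.update x i t j + Δx j) i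
              - 𝓕 (Function.update x i t) i = Δy i) ↔ _
          rw [hupd t, h𝓕, h𝓕, if_neg hl, if_neg hl, Function.update_self,
            Function.update_self,
            hgdep i _ _ (hgt_upd' t), hhdep i _ _ (hgt_upd' t),
            hgdep i _ _ (hgt_upd t), hhdep i _ _ (hgt_upd t)]
          constructor <;> intro hh <;> linear_combination hh
        rw [Finset.filter_congr (fun t _ => hcond t)]
        exact gtds_root_count d (p i) (hdeg i).1 (hdeg i).2 (Δx i) hΔ
          (hdu i (Δx i) hΔ) G' G (Δy i - H' + H) (hg i _) (hg i x)
  have hcount := gtds_count_aux n (fun i => if Δx i ≠ 0 then d else q) C hdep hcnt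
  set wt : ℕ := (Finset.univ.filter fun i => Δx i ≠ 0).card with hwt
  have hwtn : wt ≤ n := by
    calc wt ≤ Finset.univ.card := Finset.card_filter_le _ _
      _ = n := by simp
  have hprod : ∏ i : Fin n, (if Δx i ≠ 0 then d else q) = d ^ wt * q ^ (n - wt) := by
    rw [Finset.prod_ite]
    rw [Finset.prod_const, Finset.prod_const]
    congr 1
    have := Finset.card_filter_add_card_filter_not
      (s := (Finset.univ : Finset (Fin n))) (p := fun i => Δx i ≠ 0)
    simp only [Finset.card_univ, Fintype.card_fin] at this
    congr 1
    omega
  have hcard : Nat.card {x : Fin n → F | ∀ i, 𝓕 (fun j => x j + Δx j) i - 𝓕 x i = Δy i}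
      ≤ d ^ wt * q ^ (n - wt) := by
    rw [← hprod]
    refine le_trans (le_of_eq ?_) hcount
    rw [Nat.card_eq_fintype_card]
    rw [Fintype.card_subtype]
    congr 1
  -- final real arithmetic
  have hqR : (0 : ℝ) < (q : ℝ) := by exact_mod_cast hq0
  rw [div_le_iff₀ (by positivity)]
  have hsplit : ((d : ℝ) / (q : ℝ)) ^ wt * (q : ℝ) ^ n
      = (d : ℝ) ^ wt * (q : ℝ) ^ (n - wt) := by
    have hpow : (q : ℝ) ^ n = (q : ℝ) ^ wt * (q : ℝ) ^ (n - wt) := by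
      rw [← pow_add, Nat.add_sub_cancel' hwtn]
    rw [div_pow, hpow]
    field_simp
  rw [hsplit]
  calc (Nat.card {x : Fin n → F | ∀ i, 𝓕 (fun j => x j + Δx j) i - 𝓕 x i = Δy i} : ℝ)
      ≤ ((d ^ wt * q ^ (n - wt) : ℕ) : ℝ) := by exact_mod_cast hcard
    _ = (d : ℝ) ^ wt * (q : ℝ) ^ (n - wt) := by push_cast; ring
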